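/- arXiv:math/0306341 — 2 statements merged into one kernel-verified Lean document; each statement's English description precedes it below -/
import Mathlib

section
/- Let K be a compact Hausdorff topological group. The formula [t, k₁, k₂] · k = [t, k₁, k₂ k] defines a well-defined, continuous, free right action of K on D; the map p: D → (ℝ/ℤ) × K sending [t, k₁, k₂] to ([t], k₁) is well defined, continuous, surjective, and invariant under this action; and the induced map from the orbit space D/K to (ℝ/ℤ) × K is a homeomorphism. (This exhibits D as a principal K-bundle over S¹ × K.) -/
/-- The action of `λ ∈ ℤ` on `ℝ × K × K` given by
`λ · (t, k₁, k₂) = (t + λ, k₁, k₁^λ k₂)`. -/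
def zAct (K : Type*) [Group K] (n : ℤ) (x : ℝ × K × K) : ℝ × K × K :=
  (x.1 + n, x.2.1, x.2.1 ^ n * x.2.2)

/-- The bundle `D = (ℝ × K × K)/ℤ`. -/
abbrev bundleD (K : Type*) [Group K] : Type _ :=
  Quot (fun x y : ℝ × K × K => ∃ n : ℤ, zAct K n x = y)

section aux

variable {K : Type*} [Group K]

lemma zAct_zAct (m n : ℤ) (x : ℝ × K × K) :
    zAct K m (zAct K n x) = zAct K (n + m) x := by
  simp only [zAct, Prod.mk.injEq]
  refine ⟨by push_cast; ring, trivial, by rw [← mul_assoc, ← zpow_add, add_comm]⟩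

lemma zAct_zero (x : ℝ × K × K) : zAct K 0 x = x := by
  simp [zAct]

lemma zRel_equivalence :
    Equivalence (fun x y : ℝ × K × K => ∃ n : ℤ, zAct K n x = y) := by
  constructor
  · exact fun x => ⟨0, zAct_zero x⟩
  · rintro x y ⟨n, rfl⟩
    exact ⟨-n, by rw [zAct_zAct, add_neg_cancel, zAct_zero]⟩
  · rintro x y z ⟨n, rfl⟩ ⟨m, rfl⟩
    exact ⟨n + m, (zAct_zAct m n x).symm⟩

lemma bundleD_mk_eq {x y : ℝ × K × K} :
    (Quot.mk _ x : bundleD K) = Quot.mk _ y ↔ ∃ n : ℤ, zAct K n x = y :=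
  ⟨fun h => (zRel_equivalence.eqvGen_iff).mp (Quot.eqvGen_exact h),
   fun h => Quot.sound h⟩

lemma coe_add_int_unitAddCircle (x : ℝ) (n : ℤ) :
    ((x + n : ℝ) : UnitAddCircle) = x := by
  have h : ((n : ℝ) : UnitAddCircle) = 0 := by
    rw [AddCircle.coe_eq_zero_iff]; exact ⟨n, by simp⟩
  rw [AddCircle.coe_add, h, add_zero]

variable [TopologicalSpace K] [IsTopologicalGroup K]

lemma continuous_zAct (n : ℤ) : Continuous (zAct K n) := by
  unfold zAct
  fun_prop

lemma isOpenMap_bundleD_mk :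
    IsOpenMap (Quot.mk _ : ℝ × K × K → bundleD K) := by
  intro U hU
  rw [isOpen_coinduced]
  have h1 : (Quot.mk _ : ℝ × K × K → bundleD K) ⁻¹' (Quot.mk _ '' U) =
      ⋃ n : ℤ, zAct K n '' U := by
    ext x
    simp only [Set.mem_preimage, Set.mem_image, Set.mem_iUnion]
    constructor
    · rintro ⟨u, hu, h⟩
      obtain ⟨n, rfl⟩ := bundleD_mk_eq.mp h
      exact ⟨n, u, hu, rfl⟩
    · rintro ⟨n, u, hu, rfl⟩
      refine ⟨u, hu, Quot.sound ⟨n, rfl⟩⟩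
  rw [h1]
  refine isOpen_iUnion fun n => ?_
  have h2 : zAct K n '' U = zAct K (-n) ⁻¹' U := by
    ext x
    constructor
    · rintro ⟨u, hu, rfl⟩
      simpa [Set.mem_preimage, zAct_zAct, add_neg_cancel, zAct_zero] using hu
    · intro hx
      exact ⟨zAct K (-n) x, hx, by rw [zAct_zAct, neg_add_cancel, zAct_zero]⟩
  rw [h2]
  exact hU.preimage (continuous_zAct _)

lemma isOpenQuotientMap_bundleD_mk :
    IsOpenQuotientMap (Quot.mk _ : ℝ × K × K → bundleD K) :=
  ⟨Quot.mk_surjective, continuous_quot_mk, isOpenMap_bundleD_mk⟩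

omit [IsTopologicalGroup K] in
lemma compactSpace_bundleD [CompactSpace K] : CompactSpace (bundleD K) := by
  constructor
  have h : Quot.mk _ '' (Set.Icc (0 : ℝ) 1 ×ˢ (Set.univ ×ˢ Set.univ)) =
      (Set.univ : Set (bundleD K)) := by
    rw [Set.eq_univ_iff_forall]
    intro d
    induction d using Quot.ind with
    | _ x =>
      obtain ⟨t, a, b⟩ := x
      refine ⟨(Int.fract t, a, a ^ (-⌊t⌋) * b), ?_, ?_⟩
      · exact ⟨⟨Int.fract_nonneg t, (Int.fract_lt_one t).le⟩, trivial, trivial⟩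
      · refine Quot.sound ⟨⌊t⌋, ?_⟩
        simp only [zAct, Prod.mk.injEq]
        refine ⟨Int.fract_add_floor t, trivial,
          by rw [← mul_assoc, ← zpow_add, add_neg_cancel, zpow_zero, one_mul]⟩
  rw [← h]
  exact ((isCompact_Icc.prod (isCompact_univ.prod isCompact_univ)).image continuous_quot_mk)

end aux

/-- `[t, k₁, k₂] · k = [t, k₁, k₂ k]` is a well-defined, continuous, free right action
of `K` on `D`; the map `p : D → (ℝ/ℤ) × K`, `[t, k₁, k₂] ↦ ([t], k₁)`, is well defined,
continuous, surjective and invariant; and the induced map `D/K → (ℝ/ℤ) × K` is a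
homeomorphism. -/
theorem stmt4 (K : Type*) [Group K] [TopologicalSpace K] [IsTopologicalGroup K]
    [CompactSpace K] [T2Space K] :
    ∃ act : bundleD K → K → bundleD K,
      (∀ (t : ℝ) (k₁ k₂ k : K),
        act (Quot.mk _ (t, k₁, k₂)) k = Quot.mk _ (t, k₁, k₂ * k)) ∧
      Continuous (fun z : bundleD K × K => act z.1 z.2) ∧
      (∀ d, act d 1 = d) ∧
      (∀ d k k', act (act d k) k' = act d (k * k')) ∧
      (∀ d k, act d k = d → k = 1) ∧
      ∃ p : bundleD K → UnitAddCircle × K,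
        (∀ (t : ℝ) (k₁ k₂ : K),
          p (Quot.mk _ (t, k₁, k₂)) = ((t : UnitAddCircle), k₁)) ∧
        Continuous p ∧ Function.Surjective p ∧
        (∀ d k, p (act d k) = p d) ∧
        ∃ h : Quot (fun d d' : bundleD K => ∃ k : K, act d k = d') ≃ₜ UnitAddCircle × K,
          ∀ d : bundleD K, h (Quot.mk _ d) = p d := by
  -- the action
  have actwd : ∀ k : K, ∀ x y : ℝ × K × K, (∃ n : ℤ, zAct K n x = y) →
      (∃ n : ℤ, zAct K n (x.1, x.2.1, x.2.2 * k) = (y.1, y.2.1, y.2.2 * k)) := by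
    rintro k x y ⟨n, rfl⟩
    exact ⟨n, by simp [zAct, mul_assoc]⟩
  set act : bundleD K → K → bundleD K := fun d k =>
    Quot.map (fun x : ℝ × K × K => (x.1, x.2.1, x.2.2 * k)) (actwd k) d with hact
  have act_mk : ∀ (x : ℝ × K × K) (k : K),
      act (Quot.mk _ x) k = Quot.mk _ (x.1, x.2.1, x.2.2 * k) := fun _ _ => rfl
  refine ⟨act, fun t k₁ k₂ k => act_mk (t, k₁, k₂) k, ?_, ?_, ?_, ?_, ?_⟩
  · -- continuity of the action
    have hq : IsOpenQuotientMap (Prod.map (Quot.mk _ : ℝ × K × K → bundleD K) (id : K → K)) :=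
      isOpenQuotientMap_bundleD_mk.prodMap .id
    rw [← hq.continuous_comp_iff]
    show Continuous fun z : (ℝ × K × K) × K =>
      (Quot.mk _ (z.1.1, z.1.2.1, z.1.2.2 * z.2) : bundleD K)
    exact continuous_quot_mk.comp (by fun_prop)
  · -- identity
    intro d
    induction d using Quot.ind with
    | _ x => rw [act_mk]; simp
  · -- compatibility
    intro d k k'
    induction d using Quot.ind with
    | _ x => rw [act_mk, act_mk, act_mk, mul_assoc]
  · -- freeness
    intro d k h
    induction d using Quot.ind with
    | _ x =>
      obtain ⟨t, a, b⟩ := x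
      rw [act_mk] at h
      obtain ⟨n, hn⟩ := bundleD_mk_eq.mp h
      simp only [zAct, Prod.mk.injEq] at hn
      obtain ⟨h1, _, h3⟩ := hn
      have hn0 : n = 0 := by
        have : (n : ℝ) = 0 := by linarith
        exact_mod_cast this
      rw [hn0, zpow_zero, one_mul] at h3
      exact mul_left_cancel (h3.trans (mul_one b).symm)
  -- the projection p
  have pwd : ∀ x y : ℝ × K × K, (∃ n : ℤ, zAct K n x = y) →
      ((x.1 : UnitAddCircle), x.2.1) = ((y.1 : UnitAddCircle), y.2.1) := by
    rintro x y ⟨n, rfl⟩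
    exact Prod.ext (coe_add_int_unitAddCircle x.1 n).symm rfl
  set p : bundleD K → UnitAddCircle × K :=
    Quot.lift (fun x : ℝ × K × K => ((x.1 : UnitAddCircle), x.2.1)) pwd with hp
  have p_mk : ∀ (t : ℝ) (k₁ k₂ : K),
      p (Quot.mk _ (t, k₁, k₂)) = ((t : UnitAddCircle), k₁) := fun _ _ _ => rfl
  have p_cont : Continuous p :=
    continuous_quot_lift _
      (((AddCircle.continuous_mk' 1).comp continuous_fst).prodMk
        (continuous_fst.comp continuous_snd))
  have p_surj : Function.Surjective p := by
    rintro ⟨u, k⟩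
    obtain ⟨t, rfl⟩ := QuotientAddGroup.mk_surjective u
    exact ⟨Quot.mk _ (t, k, 1), rfl⟩
  have p_inv : ∀ d k, p (act d k) = p d := by
    intro d k
    induction d using Quot.ind with
    | _ x => rfl
  refine ⟨p, p_mk, p_cont, p_surj, p_inv, ?_⟩
  -- the homeomorphism
  have hwd : ∀ d d' : bundleD K, (∃ k : K, act d k = d') → p d = p d' := by
    rintro d d' ⟨k, rfl⟩
    exact (p_inv d k).symm
  set hfun : Quot (fun d d' : bundleD K => ∃ k : K, act d k = d') → UnitAddCircle × K :=
    Quot.lift p hwd with hhfun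
  have hcont : Continuous hfun := continuous_quot_lift _ p_cont
  have hinj : Function.Injective hfun := by
    intro q q'
    induction q using Quot.ind with
    | _ d =>
    induction q' using Quot.ind with
    | _ d' =>
    induction d using Quot.ind with
    | _ x =>
    induction d' using Quot.ind with
    | _ y =>
      obtain ⟨t, a, b⟩ := x
      obtain ⟨t', a', b'⟩ := y
      intro h
      have h' : ((t : UnitAddCircle), a) = ((t' : UnitAddCircle), a') := h
      have h1 : (t : UnitAddCircle) = t' := congrArg Prod.fst h'
      have h2 : a = a' := congrArg Prod.snd h'
      subst h2
      have h0 : ((t' - t : ℝ) : UnitAddCircle) = 0 := by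
        rw [AddCircle.coe_sub, h1, sub_self]
      rw [AddCircle.coe_eq_zero_iff] at h0
      obtain ⟨n, hn⟩ := h0
      have htt : t' = t + n := by simp at hn; linarith
      refine Quot.sound ⟨b⁻¹ * (a ^ n)⁻¹ * b', ?_⟩
      rw [act_mk]
      refine Quot.sound ⟨n, ?_⟩
      simp only [zAct, Prod.mk.injEq]
      exact ⟨htt.symm, trivial, by group⟩
  have hsurj : Function.Surjective hfun := by
    intro z
    obtain ⟨d, rfl⟩ := p_surj z
    exact ⟨Quot.mk _ d, rfl⟩
  haveI : CompactSpace (bundleD K) := compactSpace_bundleD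
  let e : Quot (fun d d' : bundleD K => ∃ k : K, act d k = d') ≃ UnitAddCircle × K :=
    Equiv.ofBijective hfun ⟨hinj, hsurj⟩
  exact ⟨Continuous.homeoOfEquivCompactToT2 (f := e) hcont, fun d => rfl⟩
end

section
/- Let K be a compact Hausdorff topological group. Let Q = (ℝ × K^{2g} × K)/ℤ, where ℤ acts by λ · (t, X, k) = (t + λ, X, Φ(X)^λ k), and let P ⊆ ((ℝ/ℤ) × K^{2g}) × D be the fibre product P = { ((s, X), d) : p(d) = (s, Φ(X)) }, where p: D → (ℝ/ℤ) × K is the projection [t, k₁, k₂] ↦ ([t], k₁). Then the map Q → P sending the class of (t, X, k) to (([t], X), [t, Φ(X), k]) is well defined and is a homeomorphism, and it commutes with the natural projections of Q and P to (ℝ/ℤ) × K^{2g}. (This identifies the pullback of the bundle D under id × Φ with the quotient bundle Q.) -/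
open scoped commutatorElement

/-- The moment map `Φ : K^{2g} → K`, `Φ(X₁, …, X_{2g}) = ∏_{j=1}^g [X_{2j-1}, X_{2j}]`. -/
def momentMap (g : ℕ) {K : Type*} [Group K] (X : Fin (2 * g) → K) : K :=
  (List.ofFn (fun j : Fin g =>
    ⁅X ⟨2 * j.1, by have := j.2; omega⟩, X ⟨2 * j.1 + 1, by have := j.2; omega⟩⁆)).prod

section Aux
variable {K : Type*} [Group K] [TopologicalSpace K] [IsTopologicalGroup K]

lemma zAct_add (m n : ℤ) (x : ℝ × K × K) : zAct K (m + n) x = zAct K m (zAct K n x) := by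
  simp only [zAct]
  refine Prod.ext ?_ (Prod.ext rfl ?_)
  · push_cast; ring
  · simp [zpow_add, mul_assoc]

instance mulActZ : MulAction (Multiplicative ℤ) (ℝ × K × K) where
  smul γ x := zAct K γ.toAdd x
  one_smul x := by
    show zAct K ((1 : Multiplicative ℤ).toAdd) x = x
    simp [zAct]
  mul_smul γ δ x := by
    show zAct K ((γ * δ).toAdd) x = zAct K γ.toAdd (zAct K δ.toAdd x)
    rw [toAdd_mul]
    exact zAct_add _ _ _

lemma smul_def (γ : Multiplicative ℤ) (x : ℝ × K × K) : γ • x = zAct K γ.toAdd x := rfl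

instance : ContinuousConstSMul (Multiplicative ℤ) (ℝ × K × K) := by
  constructor
  intro γ
  simp only [smul_def, zAct]
  exact (continuous_fst.add continuous_const).prodMk
    ((continuous_fst.comp continuous_snd).prodMk
      (((continuous_fst.comp continuous_snd).zpow _).mul (continuous_snd.comp continuous_snd)))

instance : ProperlyDiscontinuousSMul (Multiplicative ℤ) (ℝ × K × K) := by
  constructor
  intro S L hS hL
  have hS1 : IsCompact (Prod.fst '' S) := hS.image continuous_fst
  have hL1 : IsCompact (Prod.fst '' L) := hL.image continuous_fst
  obtain ⟨a, ha⟩ := hS1.bddBelow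
  obtain ⟨b, hb⟩ := hS1.bddAbove
  obtain ⟨c, hc⟩ := hL1.bddBelow
  obtain ⟨d, hd⟩ := hL1.bddAbove
  have key : {γ : Multiplicative ℤ | (γ • ·) '' S ∩ L ≠ ∅} ⊆
      Multiplicative.ofAdd '' {n : ℤ | ⌈c - b⌉ ≤ n ∧ n ≤ ⌊d - a⌋} := by
    intro γ hγ
    replace hγ := Set.nonempty_iff_ne_empty.mpr hγ
    obtain ⟨y, ⟨x, hxS, rfl⟩, hyL⟩ := hγ
    refine ⟨γ.toAdd, ⟨?_, ?_⟩, rfl⟩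
    · rw [Int.ceil_le]
      have h1 : x.1 ≤ b := hb ⟨x, hxS, rfl⟩
      have h2 : c ≤ (γ • x).1 := hc ⟨γ • x, hyL, rfl⟩
      have h3 : (γ • x).1 = x.1 + γ.toAdd := rfl
      push_cast
      linarith
    · rw [Int.le_floor]
      have h1 : a ≤ x.1 := ha ⟨x, hxS, rfl⟩
      have h2 : (γ • x).1 ≤ d := hd ⟨γ • x, hyL, rfl⟩
      have h3 : (γ • x).1 = x.1 + γ.toAdd := rfl
      push_cast
      linarith
  exact ((Set.finite_Icc ⌈c - b⌉ ⌊d - a⌋).subset (fun n hn => hn)).image _ |>.subset (fun γ hγ => key (Set.nonempty_iff_ne_empty.mp hγ))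

def orbitEquivD : Quotient (MulAction.orbitRel (Multiplicative ℤ) (ℝ × K × K)) ≃ₜ bundleD K where
  toFun := Quotient.lift (Quot.mk _) (by
    rintro x y ⟨γ, rfl⟩
    exact (Quot.sound ⟨γ.toAdd, rfl⟩).symm)
  invFun := Quot.lift (Quotient.mk (MulAction.orbitRel (Multiplicative ℤ) (ℝ × K × K)))
    (fun x y h => by
      obtain ⟨n, rfl⟩ := h
      exact (Quotient.sound (MulAction.mem_orbit x (Multiplicative.ofAdd n))).symm)
  left_inv := by rintro ⟨x⟩; rfl
  right_inv := by rintro ⟨x⟩; rfl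
  continuous_toFun := continuous_quot_lift _ continuous_quot_mk
  continuous_invFun := continuous_quot_lift _ continuous_quot_mk

lemma bundleD_t2 [CompactSpace K] [T2Space K] : T2Space (bundleD K) :=
  (orbitEquivD (K := K)).symm.isEmbedding.t2Space

lemma continuous_momentMap (g : ℕ) : Continuous (momentMap g (K := K)) := by
  unfold momentMap
  simp only [List.ofFn_eq_map]
  apply continuous_list_prod
  intro i _
  simp only [commutatorElement_def]
  fun_prop

end Aux

/-- The quotient `Q = (ℝ × K^{2g} × K)/ℤ` (where `λ · (t, X, k) = (t + λ, X, Φ(X)^λ k)`)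
is homeomorphic, over `(ℝ/ℤ) × K^{2g}`, to the fibre product
`P = {((s, X), d) : p(d) = (s, Φ(X))}`, via the class of `(t, X, k)` mapping to
`(([t], X), [t, Φ(X), k])`. -/
theorem stmt8 (g : ℕ) (hg : 1 ≤ g) (K : Type*) [Group K] [TopologicalSpace K]
    [IsTopologicalGroup K] [CompactSpace K] [T2Space K]
    (p : bundleD K → UnitAddCircle × K)
    (hp : ∀ (t : ℝ) (k₁ k₂ : K),
      p (Quot.mk _ (t, k₁, k₂)) = ((t : UnitAddCircle), k₁)) :
    ∃ h : Quot (fun x y : ℝ × (Fin (2 * g) → K) × K =>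
          ∃ n : ℤ, (x.1 + n, x.2.1, momentMap g x.2.1 ^ n * x.2.2) = y) ≃ₜ
        {y : (UnitAddCircle × (Fin (2 * g) → K)) × bundleD K //
          p y.2 = (y.1.1, momentMap g y.1.2)},
      (∀ (t : ℝ) (X : Fin (2 * g) → K) (k : K),
        (h (Quot.mk _ (t, X, k)) :
            (UnitAddCircle × (Fin (2 * g) → K)) × bundleD K) =
          (((t : UnitAddCircle), X), Quot.mk _ (t, momentMap g X, k))) ∧
      ∃ prQ : Quot (fun x y : ℝ × (Fin (2 * g) → K) × K =>
            ∃ n : ℤ, (x.1 + n, x.2.1, momentMap g x.2.1 ^ n * x.2.2) = y) →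
          UnitAddCircle × (Fin (2 * g) → K),
        (∀ (t : ℝ) (X : Fin (2 * g) → K) (k : K),
          prQ (Quot.mk _ (t, X, k)) = ((t : UnitAddCircle), X)) ∧
        ∀ z, ((h z : (UnitAddCircle × (Fin (2 * g) → K)) × bundleD K)).1 = prQ z := by
  haveI : T2Space (bundleD K) := bundleD_t2
  set rQ : (ℝ × (Fin (2 * g) → K) × K) → (ℝ × (Fin (2 * g) → K) × K) → Prop :=
    fun x y => ∃ n : ℤ, (x.1 + n, x.2.1, momentMap g x.2.1 ^ n * x.2.2) = y with hrQ
  set P := {y : (UnitAddCircle × (Fin (2 * g) → K)) × bundleD K //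
          p y.2 = (y.1.1, momentMap g y.1.2)} with hP
  -- integer coercion vanishes in UnitAddCircle
  have hcoe : ∀ (t : ℝ) (n : ℤ), ((t + n : ℝ) : UnitAddCircle) = (t : UnitAddCircle) := by
    intro t n
    have : ((n : ℝ) : UnitAddCircle) = 0 := by
      rw [AddCircle.coe_eq_zero_iff]
      exact ⟨n, by simp⟩
    push_cast
    rw [QuotientAddGroup.mk_add, this, add_zero]
  -- forward map
  let F : ℝ × (Fin (2 * g) → K) × K → P := fun x =>
    ⟨(((x.1 : UnitAddCircle), x.2.1), Quot.mk _ (x.1, momentMap g x.2.1, x.2.2)),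
      by simpa using hp x.1 (momentMap g x.2.1) x.2.2⟩
  have hF : ∀ x y, rQ x y → F x = F y := by
    rintro x y ⟨n, rfl⟩
    apply Subtype.ext
    refine Prod.ext (Prod.ext ?_ rfl) ?_
    · exact (hcoe x.1 n).symm
    · exact Quot.sound ⟨n, rfl⟩
  let fQ : Quot rQ → P := Quot.lift F hF
  -- inverse map
  let Ginn : (Fin (2 * g) → K) → bundleD K → Quot rQ := fun X =>
    Quot.lift (fun z => Quot.mk rQ
        (z.1, X, momentMap g X ^ ⌊z.1⌋ * z.2.1 ^ (-⌊z.1⌋) * z.2.2))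
      (by
        rintro a b ⟨n, rfl⟩
        apply Quot.sound
        refine ⟨n, ?_⟩
        show (a.1 + (n : ℝ), X,
            momentMap g X ^ n * (momentMap g X ^ ⌊a.1⌋ * a.2.1 ^ (-⌊a.1⌋) * a.2.2)) =
          (a.1 + (n : ℝ), X, momentMap g X ^ ⌊a.1 + (n : ℝ)⌋ *
            a.2.1 ^ (-⌊a.1 + (n : ℝ)⌋) * (a.2.1 ^ n * a.2.2))
        refine Prod.ext rfl (Prod.ext rfl ?_)
        rw [Int.floor_add_intCast]
        group)
  let gP : P → Quot rQ := fun y => Ginn y.1.1.2 y.1.2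
  have hleft : ∀ q, gP (fQ q) = q := by
    rintro ⟨t, X, k⟩
    have h0 : fQ (Quot.mk rQ (t, X, k)) = F (t, X, k) := rfl
    have h0b : gP (F (t, X, k)) = Ginn X (Quot.mk _ (t, momentMap g X, k)) := rfl
    have h0c : Ginn X (Quot.mk _ (t, momentMap g X, k)) =
        Quot.mk rQ (t, X, momentMap g X ^ ⌊t⌋ * momentMap g X ^ (-⌊t⌋) * k) := rfl
    show gP (fQ (Quot.mk rQ (t, X, k))) = Quot.mk rQ (t, X, k)
    rw [h0, h0b, h0c]
    have hk : momentMap g X ^ ⌊t⌋ * momentMap g X ^ (-⌊t⌋) * k = k := by group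
    rw [hk]
  have hright : ∀ y, fQ (gP y) = y := by
    rintro ⟨⟨⟨s, X⟩, d⟩, hy⟩
    obtain ⟨⟨t, k₁, k₂⟩, rfl⟩ := Quot.exists_rep d
    rw [hp] at hy
    simp only [Prod.mk.injEq] at hy
    obtain ⟨hs, hk⟩ := hy
    subst hs
    subst hk
    have hc : momentMap g X ^ ⌊t⌋ * momentMap g X ^ (-⌊t⌋) * k₂ = k₂ := by group
    have e2 : Ginn X (Quot.mk (fun x y => ∃ n, zAct K n x = y) (t, momentMap g X, k₂)) =
        Quot.mk rQ (t, X, momentMap g X ^ ⌊t⌋ * momentMap g X ^ (-⌊t⌋) * k₂) := rfl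
    apply Subtype.ext
    show (fQ (Ginn X (Quot.mk (fun x y => ∃ n, zAct K n x = y) (t, momentMap g X, k₂)))).1 =
      (((t : UnitAddCircle), X),
        Quot.mk (fun x y => ∃ n, zAct K n x = y) (t, momentMap g X, k₂))
    rw [e2, hc]
  -- continuity of the forward map
  have hFc : Continuous F := by
    apply Continuous.subtype_mk
    apply Continuous.prodMk
    · exact (continuous_quot_mk.comp continuous_fst).prodMk (continuous_fst.comp continuous_snd)
    · exact continuous_quot_mk.comp (continuous_fst.prodMk
        (((continuous_momentMap g).comp (continuous_fst.comp continuous_snd)).prodMk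
          (continuous_snd.comp continuous_snd)))
  have hfQc : Continuous fQ := continuous_quot_lift hF hFc
  -- compactness of Q
  haveI : CompactSpace (Quot rQ) := by
    constructor
    have himg : Quot.mk rQ '' (Set.Icc (0 : ℝ) 1 ×ˢ
        (Set.univ : Set ((Fin (2 * g) → K) × K))) = Set.univ := by
      apply Set.eq_univ_of_forall
      intro q
      obtain ⟨⟨t, X, k⟩, rfl⟩ := Quot.exists_rep q
      refine ⟨(t + ((-⌊t⌋ : ℤ) : ℝ), X, momentMap g X ^ (-⌊t⌋) * k), ⟨?_, Set.mem_univ _⟩, ?_⟩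
      · constructor
        · push_cast
          have := Int.floor_le t
          linarith
        · push_cast
          have := Int.lt_floor_add_one t
          linarith
      · exact (Quot.sound ⟨-⌊t⌋, rfl⟩).symm
    rw [← himg]
    exact (isCompact_Icc.prod isCompact_univ).image continuous_quot_mk
  let e : Quot rQ ≃ P := ⟨fQ, gP, hleft, hright⟩
  let h : Quot rQ ≃ₜ P := Continuous.homeoOfEquivCompactToT2 (f := e) hfQc
  have key : ∀ x : ℝ × (Fin (2 * g) → K) × K,
      (h (Quot.mk rQ x) : (UnitAddCircle × (Fin (2 * g) → K)) × bundleD K) =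
        (((x.1 : UnitAddCircle), x.2.1),
          Quot.mk (fun x y : ℝ × K × K => ∃ n : ℤ, zAct K n x = y)
            (x.1, momentMap g x.2.1, x.2.2)) := by
    intro x
    have b1 : h (Quot.mk rQ x) = fQ (Quot.mk rQ x) := rfl
    have b2 : fQ (Quot.mk rQ x) = F x := rfl
    rw [b1, b2]
  refine ⟨h, fun t X k => key (t, X, k),
    fun z => ((h z : (UnitAddCircle × (Fin (2 * g) → K)) × bundleD K)).1,
    fun t X k => congrArg Prod.fst (key (t, X, k)), fun z => rfl⟩
end
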